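/- With G as above (the matrix of Theorem 2, built from exponent sets satisfying the zero-sum characterization), for every repair group R_i the submatrix G_{R_i} of the r+1 columns indexed by R_i has rank exactly r, and consequently the code C punctured to R_i (i.e., C|_{R_i}) has minimum distance at least 2, i.e., any single erasure within a repair group can be corrected from the remaining r coordinates of that group. -/

import Mathlib

/-- Locality property: for the generator matrix `G` of the construction, whose exponents
are distinct and sum to `0 mod q-1` within each repair group, the submatrix of columns of
any repair group `R_i` has rank exactly `r`, and each column of the group lies in the
span of the other `r` columns (so a single erasure in a group can be corrected). -/
theorem statement17 (q r m : ℕ) (hr : 1 ≤ r) (F : Type*) [Field F] [Fintype F]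
    (hF : Fintype.card F = q) (γ : F) (hγ : IsPrimitiveRoot γ (q - 1))
    (a : Fin m → Fin (r + 1) → ZMod (q - 1))
    (hinj : Function.Injective fun p : Fin m × Fin (r + 1) => a p.1 p.2)
    (hgroup : ∀ i : Fin m, (∑ j, a i j) = 0)
    (G : Matrix (Fin (r + 1)) (Fin m × Fin (r + 1)) F)
    (hG : ∀ ℓ p, G ℓ p =
      if (ℓ : ℕ) < r then γ ^ (((ℓ : ℕ) + 1) * (a p.1 p.2).val)
      else γ ^ ((r + 1) * (a p.1 p.2).val) + (-1) ^ (r + 1))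
    (i : Fin m) :
    (G.submatrix id fun j : Fin (r + 1) => ((i, j) : Fin m × Fin (r + 1))).rank = r ∧
      ∀ j : Fin (r + 1), (fun ℓ => G ℓ (i, j)) ∈
        Submodule.span F {v : Fin (r + 1) → F | ∃ j' : Fin (r + 1), j' ≠ j ∧
          v = fun ℓ => G ℓ (i, j')} := by
  classical
  -- basic facts
  have hq2 : 2 ≤ q := hF ▸ Fintype.one_lt_card
  haveI : NeZero (q - 1) := ⟨by omega⟩
  have hγ0 : γ ≠ 0 := hγ.ne_zero (by omega)
  set x : Fin (r + 1) → F := fun j => γ ^ (a i j).val with hx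
  have hx0 : ∀ j, x j ≠ 0 := fun j => pow_ne_zero _ hγ0
  have hxinj : Function.Injective x := by
    intro j j' h
    have h1 := hγ.pow_inj (ZMod.val_lt _) (ZMod.val_lt _) h
    have h2 : a i j = a i j' := ZMod.val_injective _ h1
    have h3 : ((i, j) : Fin m × Fin (r + 1)) = (i, j') := hinj h2
    exact (Prod.ext_iff.mp h3).2
  have hprod : ∏ j, x j = 1 := by
    have hdvd : (q - 1) ∣ ∑ j, (a i j).val := by
      rw [← ZMod.natCast_eq_zero_iff]
      push_cast [ZMod.natCast_val, ZMod.cast_id]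
      exact hgroup i
    obtain ⟨t, ht⟩ := hdvd
    rw [hx, Finset.prod_pow_eq_pow_sum, ht, pow_mul, hγ.pow_eq_one, one_pow]
  -- columns
  set col : Fin (r + 1) → (Fin (r + 1) → F) := fun j ℓ => G ℓ (i, j) with hcol
  have hcol_top : ∀ (ℓ : Fin r) (j : Fin (r + 1)),
      col j ℓ.castSucc = x j ^ ((ℓ : ℕ) + 1) := by
    intro ℓ j
    rw [hcol]
    simp only [hG]
    rw [if_pos (by simpa using ℓ.isLt), pow_mul', Fin.coe_castSucc]
  have hcol_last : ∀ j, col j (Fin.last r) = x j ^ (r + 1) + (-1 : F) ^ (r + 1) := by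
    intro j
    rw [hcol]
    simp only [hG]
    rw [if_neg (by simp), pow_mul']
  -- the polynomial with roots x j
  set P : Polynomial F := ∏ k, (Polynomial.X - Polynomial.C (x k)) with hP
  have hPm : P.Monic := Polynomial.monic_prod_of_monic _ _ fun k _ => Polynomial.monic_X_sub_C _
  have hPdeg : P.natDegree = r + 1 := by
    rw [hP, Polynomial.natDegree_prod _ _ fun k _ => Polynomial.X_sub_C_ne_zero _]
    simp
  have hPtop : P.coeff (r + 1) = 1 := by
    have := hPm.coeff_natDegree
    rwa [hPdeg] at this
  have hP0 : P.coeff 0 = (-1 : F) ^ (r + 1) := by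
    rw [Polynomial.coeff_zero_eq_eval_zero, hP, Polynomial.eval_prod]
    simp only [Polynomial.eval_sub, Polynomial.eval_X, Polynomial.eval_C, zero_sub]
    rw [show (fun k => -x k) = fun k => (-1 : F) * x k by funext k; ring,
      Finset.prod_mul_distrib, hprod, mul_one, Finset.prod_const]
    simp
  set c : Fin r → F := fun ℓ => -(P.coeff ((ℓ : ℕ) + 1)) with hc
  have hrel : ∀ j, x j ^ (r + 1) + (-1 : F) ^ (r + 1)
      = ∑ ℓ : Fin r, c ℓ * x j ^ ((ℓ : ℕ) + 1) := by
    intro j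
    have hev : P.eval (x j) = 0 := by
      rw [hP, Polynomial.eval_prod]
      exact Finset.prod_eq_zero (Finset.mem_univ j) (by simp)
    have hev2 : ∑ s ∈ Finset.range (r + 2), P.coeff s * x j ^ s = 0 := by
      rw [← Polynomial.eval_eq_sum_range' (by omega : P.natDegree < r + 2)]
      exact hev
    rw [Finset.sum_range_succ, Finset.sum_range_succ'] at hev2
    rw [hPtop, hP0] at hev2
    rw [hc, Fin.sum_univ_eq_sum_range (fun ℓ => -(P.coeff (ℓ + 1)) * x j ^ (ℓ + 1)),
      show (fun ℓ => -(P.coeff (ℓ + 1)) * x j ^ (ℓ + 1))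
        = fun ℓ => -(P.coeff (ℓ + 1) * x j ^ (ℓ + 1)) by funext ℓ; ring,
      Finset.sum_neg_distrib]
    linear_combination hev2
  -- the functional cutting out the column space
  set φ : (Fin (r + 1) → F) →ₗ[F] F :=
    LinearMap.proj (Fin.last r) - ∑ ℓ : Fin r, c ℓ • LinearMap.proj ℓ.castSucc with hφdef
  have hφ : ∀ v : Fin (r + 1) → F,
      φ v = v (Fin.last r) - ∑ ℓ : Fin r, c ℓ * v ℓ.castSucc := by
    intro v
    simp [hφdef, LinearMap.sum_apply]
  have hcolU : ∀ j, col j ∈ LinearMap.ker φ := by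
    intro j
    rw [LinearMap.mem_ker, hφ, hcol_last]
    simp only [hcol_top]
    rw [hrel j, sub_self]
  have hφsurj : Function.Surjective φ := by
    intro y
    refine ⟨Pi.single (Fin.last r) y, ?_⟩
    rw [hφ]
    simp [Pi.single_eq_of_ne (Fin.castSucc_lt_last _).ne]
  have hUrank : Module.finrank F (LinearMap.ker φ) = r := by
    have h1 := LinearMap.finrank_range_add_finrank_ker φ
    rw [LinearMap.range_eq_top.2 hφsurj, finrank_top] at h1
    rw [Module.finrank_self, Module.finrank_pi] at h1
    simp at h1
    omega
  -- independence of any r of the columns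
  have hind : ∀ j : Fin (r + 1),
      LinearIndependent F (fun k : Fin r => col (j.succAbove k)) := by
    intro j
    set y : Fin r → F := fun k => x (j.succAbove k) with hy
    have hyinj : Function.Injective y := fun k k' h =>
      Fin.succAbove_right_injective (hxinj h)
    set W : Matrix (Fin r) (Fin r) F :=
      Matrix.of (fun k ℓ : Fin r => y k ^ ((ℓ : ℕ) + 1)) with hW
    have hdet : W.det ≠ 0 := by
      have hWe : W = Matrix.diagonal y * Matrix.vandermonde y := by
        ext k l
        simp [hW, Matrix.vandermonde, Matrix.mul_apply, Matrix.diagonal, pow_succ']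
      rw [hWe, Matrix.det_mul, Matrix.det_diagonal, Matrix.det_vandermonde]
      refine mul_ne_zero (Finset.prod_ne_zero_iff.2 fun k _ => hx0 _) ?_
      refine Finset.prod_ne_zero_iff.2 fun k _ => Finset.prod_ne_zero_iff.2 fun l hl => ?_
      exact sub_ne_zero.2 fun h => (Finset.mem_Ioi.1 hl).ne' (hyinj h)
    have hrows : LinearIndependent F (fun k => W k) :=
      Matrix.linearIndependent_rows_iff_isUnit.2
        ((Matrix.isUnit_iff_isUnit_det W).2 (isUnit_iff_ne_zero.2 hdet))
    have hcomp : (⇑(LinearMap.funLeft F F (Fin.castSucc : Fin r → Fin (r + 1))) ∘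
        fun k => col (j.succAbove k)) = fun k => W k := by
      funext k
      funext l
      simp [LinearMap.funLeft, hW, hcol_top, hy]
    exact LinearIndependent.of_comp (LinearMap.funLeft F F Fin.castSucc) (hcomp ▸ hrows)
  -- span of any r of the columns equals the kernel
  have hspan : ∀ j : Fin (r + 1),
      Submodule.span F (Set.range fun k : Fin r => col (j.succAbove k)) = LinearMap.ker φ := by
    intro j
    apply Submodule.eq_of_le_of_finrank_le
    · rw [Submodule.span_le]
      rintro v ⟨k, rfl⟩
      exact hcolU _
    · rw [hUrank, finrank_span_eq_card (hind j)]
      simp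
  constructor
  · rw [Matrix.rank_eq_finrank_span_cols]
    have hcols : Set.range (Matrix.col (G.submatrix id fun j : Fin (r + 1) =>
        ((i, j) : Fin m × Fin (r + 1)))) = Set.range col := rfl
    rw [hcols]
    have hall : Submodule.span F (Set.range col) = LinearMap.ker φ := by
      apply le_antisymm
      · rw [Submodule.span_le]
        rintro v ⟨j, rfl⟩
        exact hcolU j
      · rw [← hspan 0]
        apply Submodule.span_mono
        rintro v ⟨k, rfl⟩
        exact ⟨(0 : Fin (r + 1)).succAbove k, rfl⟩
    rw [hall, hUrank]
  · intro j
    have h1 : col j ∈ LinearMap.ker φ := hcolU j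
    rw [← hspan j] at h1
    refine Submodule.span_mono ?_ h1
    rintro v ⟨k, rfl⟩
    exact ⟨j.succAbove k, Fin.succAbove_ne j k, rfl⟩
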